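/- For an Alexandrov space X of finite height with Kolmogorov (T₀) quotient X₀, the Krull dimension of X, the height of X, the Krull dimension of X₀, and the height of X₀ all coincide. -/

import Mathlib

open Order Topology SeparationQuotient Set

/-- The height of a topological space: the supremum of lengths of strictly
increasing chains of point closures, as an element of `WithBot ℕ∞`. -/
noncomputable def topHeight (X : Type*) [TopologicalSpace X] : WithBot ℕ∞ :=
  Order.krullDim {S : Set X // ∃ x : X, S = closure {x}}

-- maximal element lemma
lemma exists_max_of_krullDim_ne_top {α : Type*} [PartialOrder α]
    (h : Order.krullDim α ≠ ⊤) (T : Set α) (hT : T.Nonempty) :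
    ∃ a ∈ T, ∀ b ∈ T, ¬ a < b := by
  by_contra hc
  push_neg at hc
  choose f hf1 hf2 using hc
  obtain ⟨a0, ha0⟩ := hT
  let g : ℕ → {a // a ∈ T} := fun n => Nat.rec ⟨a0, ha0⟩ (fun _ p => ⟨f p.1 p.2, hf1 p.1 p.2⟩) n
  have hmono : StrictMono (fun n => (g n).1) :=
    strictMono_nat_of_lt_succ (fun n => hf2 (g n).1 (g n).2)
  have : Order.krullDim ℕ ≤ Order.krullDim α := Order.krullDim_le_of_strictMono _ hmono
  rw [Order.krullDim_nat] at this
  exact h (top_le_iff.mp this)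

lemma exists_generic {X : Type*} [TopologicalSpace X] [AlexandrovDiscrete X]
    (hfin : topHeight X ≠ ⊤) {S : Set X} (hSi : IsIrreducible S) (hSc : IsClosed S) :
    ∃ x : X, S = closure {x} := by
  set P := {S : Set X // ∃ x : X, S = closure {x}}
  set T : Set P := {p | ∃ x ∈ S, p.1 = closure {x}} with hTdef
  obtain ⟨x0, hx0⟩ := hSi.1
  have hTne : T.Nonempty := ⟨⟨closure {x0}, x0, rfl⟩, x0, hx0, rfl⟩
  obtain ⟨p, hpT, hpmax⟩ := exists_max_of_krullDim_ne_top hfin T hTne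
  obtain ⟨x, hxS, hpx⟩ := hpT
  refine ⟨x, Subset.antisymm (fun y hyS => ?_) (closure_minimal (singleton_subset_iff.2 hxS) hSc)⟩
  -- directedness via irreducibility and exteriors
  obtain ⟨z, hzS, hzx, hzy⟩ : ∃ z ∈ S, z ∈ nhdsKer {x} ∧ z ∈ nhdsKer {y} := by
    have := hSi.2 (nhdsKer {x}) (nhdsKer {y}) isOpen_nhdsKer isOpen_nhdsKer
      ⟨x, hxS, subset_nhdsKer rfl⟩ ⟨y, hyS, subset_nhdsKer rfl⟩
    obtain ⟨z, hz1, hz2, hz3⟩ := this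
    exact ⟨z, hz1, hz2, hz3⟩
  have hzx' : closure {x} ⊆ closure ({z} : Set X) :=
    (mem_nhdsKer_singleton.1 hzx).closure_subset
  have hzy' : closure {y} ⊆ closure ({z} : Set X) :=
    (mem_nhdsKer_singleton.1 hzy).closure_subset
  have hq : (⟨closure {z}, z, rfl⟩ : P) ∈ T := ⟨z, hzS, rfl⟩
  have hle : p ≤ ⟨closure {z}, z, rfl⟩ := by
    show p.1 ⊆ closure {z}
    rw [hpx]; exact hzx'
  have heq : closure ({z} : Set X) ⊆ p.1 := by
    rcases eq_or_lt_of_le hle with h | h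
    · rw [h]
    · exact absurd h (hpmax _ hq)
  rw [hpx] at heq
  exact heq (hzy' (subset_closure rfl))

lemma krullDim_eq_topHeight {X : Type*} [TopologicalSpace X] [AlexandrovDiscrete X]
    (hfin : topHeight X ≠ ⊤) : topologicalKrullDim X = topHeight X := by
  refine Order.krullDim_eq_of_orderIso
    { toFun := fun c => ⟨c.1, exists_generic hfin c.2 c.3⟩
      invFun := fun p => ⟨p.1, p.2.choose_spec ▸ isIrreducible_singleton.closure,
        p.2.choose_spec ▸ isClosed_closure⟩
      left_inv := fun c => rfl
      right_inv := fun p => rfl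
      map_rel_iff' := Iff.rfl }

lemma topHeight_quot {X : Type*} [TopologicalSpace X] :
    topHeight (SeparationQuotient X) = topHeight X := by
  have key : ∀ x : X, mk ⁻¹' closure {mk x} = closure {x} := by
    intro x
    rw [preimage_mk_closure]
    refine Subset.antisymm (closure_minimal (fun y hy => ?_) isClosed_closure)
      (closure_mono (fun y hy => by simp only [mem_singleton_iff] at hy; simp [hy]))
    simp only [mem_preimage, mem_singleton_iff, mk_eq_mk] at hy
    exact hy.symm.specializes.mem_closure
  have pre_mem : ∀ p : {S : Set (SeparationQuotient X) // ∃ ξ, S = closure {ξ}},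
      ∃ x : X, mk ⁻¹' p.1 = closure {x} := by
    rintro ⟨p, ξ, rfl⟩
    obtain ⟨x, rfl⟩ := surjective_mk ξ
    exact ⟨x, key x⟩
  have img_mem : ∀ q : {S : Set X // ∃ x, S = closure {x}},
      ∃ ξ, mk '' q.1 = closure {ξ} := by
    rintro ⟨q, x, rfl⟩
    exact ⟨mk x, by rw [image_mk_closure, image_singleton]⟩
  refine Order.krullDim_eq_of_orderIso
    { toFun := fun p => ⟨mk ⁻¹' p.1, pre_mem p⟩
      invFun := fun q => ⟨mk '' q.1, img_mem q⟩
      left_inv := fun p => Subtype.ext (image_preimage_eq _ surjective_mk)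
      right_inv := ?_
      map_rel_iff' := ?_ }
  · rintro ⟨q, x, rfl⟩
    exact Subtype.ext (preimage_image_mk_closed isClosed_closure)
  · rintro ⟨p, hp⟩ ⟨p', hp'⟩
    show mk ⁻¹' p ⊆ mk ⁻¹' p' ↔ p ⊆ p'
    exact preimage_subset_preimage_iff (by rw [surjective_mk.range_eq]; exact subset_univ _)

instance {X : Type*} [TopologicalSpace X] [AlexandrovDiscrete X] :
    AlexandrovDiscrete (SeparationQuotient X) := by
  constructor
  intro S hS
  rw [← isQuotientMap_mk.isOpen_preimage, preimage_sInter]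
  exact isOpen_iInter₂ fun s hs => isQuotientMap_mk.isOpen_preimage.2 (hS s hs)

/-- For an Alexandrov space `X` of finite height, the Krull dimension of `X`,
the height of `X`, the Krull dimension of the Kolmogorov quotient `X₀`, and
the height of `X₀` all coincide. -/
theorem dims_and_heights_coincide {X : Type*} [TopologicalSpace X]
    [AlexandrovDiscrete X] (hfin : topHeight X ≠ ⊤) :
    topologicalKrullDim X = topHeight X ∧
    topologicalKrullDim X = topologicalKrullDim (SeparationQuotient X) ∧
    topologicalKrullDim X = topHeight (SeparationQuotient X) := by
  have h1 := krullDim_eq_topHeight hfin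
  have h2 : topHeight (SeparationQuotient X) = topHeight X := topHeight_quot
  have hfin' : topHeight (SeparationQuotient X) ≠ ⊤ := h2 ▸ hfin
  have h3 := krullDim_eq_topHeight hfin'
  exact ⟨h1, by rw [h1, h3, h2], by rw [h1, h2]⟩
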